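/- With τᵢ* := (iY₍ᵢ₎ − ∑_{k=1}^i Y₍ₖ₎) / ∑_{k=1}^n |Y₍ₖ₎ − Y₍ᵢ₎| for i = 1,…,n (assuming the denominator is positive), the empirical τ-expectile satisfies μ̂_τ = Y₍ᵢ₎ if and only if τ = τᵢ*; moreover τᵢ* ≤ τᵢ₊₁* for i = 1,…,n−1. -/
import Mathlib


open MeasureTheory Filter Set Asymptotics

noncomputable def ident (τ x y : ℝ) : ℝ :=
  if x ≤ y then τ * (y - x) else -((1 - τ) * (x - y))

noncomputable def score (τ x y : ℝ) : ℝ :=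
  τ / 2 * ((max (y - x) 0) ^ 2 - (max y 0) ^ 2) +
    (1 - τ) / 2 * ((max (x - y) 0) ^ 2 - (max (-y) 0) ^ 2)

lemma ident_eq' (τ x y : ℝ) :
    ident τ x y = τ * (max (y - x) 0 + max (x - y) 0) - max (x - y) 0 := by
  unfold ident
  rcases le_or_gt x y with h | h
  · rw [if_pos h, max_eq_left (by linarith), max_eq_right (by linarith)]
    ring
  · rw [if_neg (not_le.2 h), max_eq_right (by linarith), max_eq_left (by linarith)]
    ring

lemma ident_strict {τ : ℝ} (h0 : 0 < τ) (h1 : τ < 1) {x x' : ℝ} (h : x < x') (y : ℝ) :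
    ident τ x' y < ident τ x y := by
  unfold ident
  split_ifs with h1' h2' h3'
  · nlinarith
  · linarith
  · nlinarith
  · nlinarith

theorem empirical_expectile_tau_star
    (n : ℕ) (Y : ℕ → ℝ) (hn : 0 < n)
    (hsort : ∀ j k, j ∈ Finset.Icc 1 n → k ∈ Finset.Icc 1 n → j ≤ k → Y j ≤ Y k)
    (hne : ¬ ∀ j ∈ Finset.Icc 1 n, Y j = Y 1)
    (τstar : ℕ → ℝ)
    (hτstar : ∀ i ∈ Finset.Icc 1 n,
      τstar i = (i * Y i - ∑ k ∈ Finset.Icc 1 i, Y k) /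
        ∑ k ∈ Finset.Icc 1 n, |Y k - Y i|)
    (hden : ∀ i ∈ Finset.Icc 1 n, 0 < ∑ k ∈ Finset.Icc 1 n, |Y k - Y i|)
    (τ : ℝ) (hτ : τ ∈ Set.Ioo (0:ℝ) 1)
    (μ : ℝ) (hμ : ∑ k ∈ Finset.Icc 1 n, ident τ μ (Y k) = 0) :
    (∀ i ∈ Finset.Icc 1 n, (μ = Y i ↔ τ = τstar i)) ∧
    (∀ i ∈ Finset.Icc 1 (n - 1), τstar i ≤ τstar (i + 1)) := by
  obtain ⟨hτ0, hτ1⟩ := hτ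
  have hFne : (Finset.Icc 1 n).Nonempty := ⟨1, by simp [Finset.mem_Icc]; omega⟩
  -- notation for the two one-sided sums
  set P : ℝ → ℝ := fun x => ∑ k ∈ Finset.Icc 1 n, max (Y k - x) 0 with hP
  set N : ℝ → ℝ := fun x => ∑ k ∈ Finset.Icc 1 n, max (x - Y k) 0 with hN
  have hsum : ∀ x, ∑ k ∈ Finset.Icc 1 n, ident τ x (Y k)
      = τ * (P x + N x) - N x := by
    intro x
    simp only [hP, hN]
    rw [← Finset.sum_add_distrib, Finset.mul_sum, ← Finset.sum_sub_distrib]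
    exact Finset.sum_congr rfl fun k _ => ident_eq' τ x (Y k)
  -- strict antitonicity
  have gstrict : ∀ x x' : ℝ, x < x' →
      ∑ k ∈ Finset.Icc 1 n, ident τ x' (Y k) < ∑ k ∈ Finset.Icc 1 n, ident τ x (Y k) :=
    fun x x' h => Finset.sum_lt_sum_of_nonempty hFne fun k _ => ident_strict hτ0 hτ1 h (Y k)
  -- denominator identity
  have habs : ∀ i ∈ Finset.Icc 1 n,
      P (Y i) + N (Y i) = ∑ k ∈ Finset.Icc 1 n, |Y k - Y i| := by
    intro i hi
    simp only [hP, hN]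
    rw [← Finset.sum_add_distrib]
    refine Finset.sum_congr rfl fun k _ => ?_
    rcases le_total (Y k) (Y i) with h | h
    · rw [max_eq_right (by linarith), max_eq_left (by linarith), abs_of_nonpos (by linarith)]
      ring
    · rw [max_eq_left (by linarith), max_eq_right (by linarith), abs_of_nonneg (by linarith)]
      ring
  -- numerator identity
  have hNum : ∀ i ∈ Finset.Icc 1 n,
      N (Y i) = i * Y i - ∑ k ∈ Finset.Icc 1 i, Y k := by
    intro i hi
    have hi' := Finset.mem_Icc.1 hi
    have step1 : N (Y i) = ∑ k ∈ Finset.Icc 1 n, (if k ≤ i then Y i - Y k else 0) := by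
      simp only [hN]
      refine Finset.sum_congr rfl fun k hk => ?_
      rcases le_or_gt k i with h | h
      · rw [if_pos h, max_eq_left (sub_nonneg.2 (hsort k i hk hi h))]
      · rw [if_neg (not_le.2 h), max_eq_right (sub_nonpos.2 (hsort i k hi hk h.le))]
    rw [step1, Finset.sum_ite, Finset.sum_const_zero, add_zero]
    have hfilter : (Finset.Icc 1 n).filter (fun k => k ≤ i) = Finset.Icc 1 i := by
      ext k
      simp only [Finset.mem_filter, Finset.mem_Icc]
      omega
    rw [hfilter, Finset.sum_sub_distrib, Finset.sum_const, Nat.card_Icc]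
    simp
  -- τstar i = N (Y i) / denominator
  have hτs : ∀ i ∈ Finset.Icc 1 n,
      τstar i = N (Y i) / (P (Y i) + N (Y i)) := by
    intro i hi
    rw [hτstar i hi, ← habs i hi, ← hNum i hi]
  have hDpos : ∀ i ∈ Finset.Icc 1 n, 0 < P (Y i) + N (Y i) := by
    intro i hi; rw [habs i hi]; exact hden i hi
  constructor
  · intro i hi
    constructor
    · intro h
      subst h
      rw [hsum] at hμ
      rw [hτs i hi, eq_div_iff (ne_of_gt (hDpos i hi))]
      linarith
    · intro h
      have hg : ∑ k ∈ Finset.Icc 1 n, ident τ (Y i) (Y k) = 0 := by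
        rw [hsum, h, hτs i hi, div_mul_cancel₀ _ (ne_of_gt (hDpos i hi))]
        ring
      rcases lt_trichotomy μ (Y i) with hlt | heq | hgt
      · exact absurd (gstrict μ (Y i) hlt) (by rw [hμ, hg]; simp)
      · exact heq
      · exact absurd (gstrict (Y i) μ hgt) (by rw [hμ, hg]; simp)
  · intro i hi
    have hi' := Finset.mem_Icc.1 hi
    have hiM : i ∈ Finset.Icc 1 n := Finset.mem_Icc.2 (by omega)
    have hiM' : i + 1 ∈ Finset.Icc 1 n := Finset.mem_Icc.2 (by omega)
    have hY : Y i ≤ Y (i + 1) := hsort i (i + 1) hiM hiM' (by omega)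
    have hNmono : N (Y i) ≤ N (Y (i + 1)) := by
      refine Finset.sum_le_sum fun k _ => max_le_max (by linarith) le_rfl
    have hPmono : P (Y (i + 1)) ≤ P (Y i) := by
      refine Finset.sum_le_sum fun k _ => max_le_max (by linarith) le_rfl
    have hNn : 0 ≤ N (Y i) := Finset.sum_nonneg fun k _ => le_max_right _ _
    have hPn : 0 ≤ P (Y (i + 1)) := Finset.sum_nonneg fun k _ => le_max_right _ _
    rw [hτs i hiM, hτs (i + 1) hiM',
      div_le_div_iff₀ (hDpos i hiM) (hDpos (i + 1) hiM')]
    nlinarith
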